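/- Fixed-n calibration of posterior odds: for all n, the conditional pushforward measures of the posterior odds γ_n under the two Bayes marginals satisfy, for μ^{P̄0,γ_n | τ=n}-almost all b: (P̄1(τ=n)/P̄0(τ=n)) · (dμ^{P̄1,γ_n|τ=n}/dμ^{P̄0,γ_n|τ=n})(b) = (π(H0)/π(H1)) · b. -/

import Mathlib

open MeasureTheory ProbabilityTheory
open scoped ENNReal

/-- Fixed-`n` calibration of the posterior odds (Lemma 2, general case): with
`γ_n = (dP̄1^{(n)}/dP̄0^{(n)})·π(H1)/π(H0)` the posterior odds process, for every `n`
with `P̄0(τ = n) > 0`, `μ^{P̄0,γ_n|τ=n}`-a.e. `b` satisfies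
`(P̄1(τ=n)/P̄0(τ=n)) · (dμ^{P̄1,γ_n|τ=n}/dμ^{P̄0,γ_n|τ=n})(b) = (π(H0)/π(H1))·b`. -/
theorem fixed_n_calibration_general
    {Ω : Type*} [m0 : MeasurableSpace Ω] (ℱ : Filtration ℕ m0)
    (P0 P1 : Measure Ω) [IsProbabilityMeasure P0] [IsProbabilityMeasure P1]
    (hac01 : P1 ≪ P0) (hac10 : P0 ≪ P1)
    (π0 π1 : ℝ≥0∞) (hπ0 : 0 < π0) (hπ0' : π0 < ⊤) (hπ1 : 0 < π1) (hπ1' : π1 < ⊤)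
    (τ : Ω → ℕ) (hτ : ∀ n, MeasurableSet[ℱ n] {ω | τ ω = n})
    (γ : ℕ → Ω → ℝ≥0∞)
    (hγ : ∀ n ω, γ n ω =
      (π1 / π0) * (P1.trim (ℱ.le n)).rnDeriv (P0.trim (ℱ.le n)) ω) :
    ∀ n, P0 {ω | τ ω = n} ≠ 0 →
      ∀ᵐ b ∂(Measure.map (γ n) (P0[|{ω | τ ω = n}])),
        (P1 {ω | τ ω = n} / P0 {ω | τ ω = n}) *
          (Measure.map (γ n) (P1[|{ω | τ ω = n}])).rnDeriv
            (Measure.map (γ n) (P0[|{ω | τ ω = n}])) b = (π0 / π1) * b := by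
  intro n hA0
  set A : Set Ω := {ω | τ ω = n} with hAdef
  have hAn : MeasurableSet[ℱ n] A := hτ n
  have hA : MeasurableSet A := ℱ.le n _ hAn
  have hA1 : P1 A ≠ 0 := fun h => hA0 (hac10 h)
  have hA0t : P0 A ≠ ⊤ := measure_ne_top _ _
  have hA1t : P1 A ≠ ⊤ := measure_ne_top _ _
  set Q0 : @Measure Ω (ℱ n) := P0.trim (ℱ.le n) with hQ0def
  set Q1 : @Measure Ω (ℱ n) := P1.trim (ℱ.le n) with hQ1def
  set f : Ω → ℝ≥0∞ := Q1.rnDeriv Q0 with hfdef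
  have hfF : Measurable[ℱ n] f := Measure.measurable_rnDeriv _ _
  have hγeq : γ n = fun ω => (π1 / π0) * f ω := funext (hγ n)
  have hγF : Measurable[ℱ n] (γ n) := by
    rw [hγeq]; exact measurable_const.mul hfF
  have hγm : Measurable (γ n) := hγF.mono (ℱ.le n) le_rfl
  have hacQ : Q1 ≪ Q0 := by
    refine Measure.AbsolutelyContinuous.mk fun s hs h0 => ?_
    rw [trim_measurableSet_eq (ℱ.le n) hs] at h0 ⊢
    exact hac01 h0
  have hπ0n : π0 ≠ 0 := hπ0.ne'
  have hπ1n : π1 ≠ 0 := hπ1.ne'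
  have hπ0t : π0 ≠ ⊤ := hπ0'.ne
  have hπ1t : π1 ≠ ⊤ := hπ1'.ne
  -- f = (π0/π1) * γ n pointwise
  have hfγ : ∀ ω, (π0 / π1) * γ n ω = f ω := by
    intro ω
    rw [hγ n ω, ← mul_assoc]
    have : π0 / π1 * (π1 / π0) = 1 := by
      rw [div_eq_mul_inv, div_eq_mul_inv]
      calc π0 * π1⁻¹ * (π1 * π0⁻¹) = (π0 * π0⁻¹) * (π1⁻¹ * π1) := by ring
        _ = 1 := by
          rw [ENNReal.mul_inv_cancel hπ0n hπ0t, ENNReal.inv_mul_cancel hπ1n hπ1t, mul_one]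
    rw [this, one_mul]
  set ν : Measure ℝ≥0∞ := Measure.map (γ n) (P0.restrict A) with hνdef
  have hmap0 : Measure.map (γ n) (P0[|A]) = (P0 A)⁻¹ • ν := by
    rw [ProbabilityTheory.cond, Measure.map_smul]
  have hmap1 : Measure.map (γ n) (P1[|A]) =
      (Measure.map (γ n) (P0[|A])).withDensity
        (fun b => ((P0 A / P1 A) * (π0 / π1)) * b) := by
    refine Measure.ext fun B hB => ?_
    rw [withDensity_apply _ hB]
    have hS : MeasurableSet[ℱ n] (γ n ⁻¹' B ∩ A) := (hγF hB).inter hAn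
    have hSm : MeasurableSet (γ n ⁻¹' B ∩ A) := ℱ.le n _ hS
    -- LHS computation
    have hL : Measure.map (γ n) (P1[|A]) B =
        (P1 A)⁻¹ * ((π0 / π1) * ∫⁻ b in B, b ∂ν) := by
      rw [ProbabilityTheory.cond, Measure.map_smul, Measure.smul_apply, smul_eq_mul]
      congr 1
      rw [Measure.map_apply hγm hB, Measure.restrict_apply (hγm hB)]
      have h1 : P1 (γ n ⁻¹' B ∩ A) = Q1 (γ n ⁻¹' B ∩ A) :=
        (trim_measurableSet_eq (ℱ.le n) hS).symm
      have h2 : Q1 (γ n ⁻¹' B ∩ A) = ∫⁻ x in γ n ⁻¹' B ∩ A, f x ∂Q0 :=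
        (Measure.setLIntegral_rnDeriv hacQ _).symm
      rw [h1, h2]
      have h3 : ∫⁻ x in γ n ⁻¹' B ∩ A, f x ∂Q0
          = ∫⁻ x in γ n ⁻¹' B ∩ A, (π0 / π1) * γ n x ∂Q0 := by
        refine lintegral_congr fun x => (hfγ x).symm
      rw [h3, lintegral_const_mul _ (by exact hγF.mono le_rfl le_rfl : Measurable[ℱ n] (γ n))]
      congr 1
      have h4 : ∫⁻ x in γ n ⁻¹' B ∩ A, γ n x ∂Q0 = ∫⁻ x in γ n ⁻¹' B ∩ A, γ n x ∂P0 := by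
        rw [hQ0def, restrict_trim (ℱ.le n) _ hS, lintegral_trim (ℱ.le n) hγF]
      rw [h4]
      have h5 : P0.restrict (γ n ⁻¹' B ∩ A) = (P0.restrict A).restrict (γ n ⁻¹' B) := by
        rw [Measure.restrict_restrict (hγm hB)]
      rw [h5]
      exact (setLIntegral_map hB measurable_id hγm).symm
    -- RHS computation
    have hR : ∫⁻ b in B, ((P0 A / P1 A) * (π0 / π1)) * b
          ∂(Measure.map (γ n) (P0[|A]))
        = (P0 A)⁻¹ * ((P0 A / P1 A) * (π0 / π1) * ∫⁻ b in B, b ∂ν) := by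
      rw [hmap0, Measure.restrict_smul, lintegral_smul_measure]
      congr 1
      exact lintegral_const_mul _ measurable_id
    rw [hL, hR]
    have hc : (P1 A)⁻¹ * (π0 / π1) = (P0 A)⁻¹ * ((P0 A / P1 A) * (π0 / π1)) := by
      rw [div_eq_mul_inv (P0 A)]
      calc (P1 A)⁻¹ * (π0 / π1)
          = ((P0 A)⁻¹ * P0 A) * ((P1 A)⁻¹ * (π0 / π1)) := by
            rw [ENNReal.inv_mul_cancel hA0 hA0t, one_mul]
        _ = (P0 A)⁻¹ * (P0 A * (P1 A)⁻¹ * (π0 / π1)) := by ring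
    rw [← mul_assoc, ← mul_assoc, ← hc, mul_assoc]
  -- now use rnDeriv_withDensity
  haveI : IsProbabilityMeasure (P0[|A]) := cond_isProbabilityMeasure hA0
  haveI : IsProbabilityMeasure (Measure.map (γ n) (P0[|A])) :=
    Measure.isProbabilityMeasure_map hγm.aemeasurable
  have hrn := Measure.rnDeriv_withDensity (Measure.map (γ n) (P0[|A]))
    (f := fun b : ℝ≥0∞ => ((P0 A / P1 A) * (π0 / π1)) * b)
    (measurable_const.mul measurable_id :
      Measurable (fun b : ℝ≥0∞ => ((P0 A / P1 A) * (π0 / π1)) * b))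
  rw [hmap1]
  filter_upwards [hrn] with b hb
  rw [hb]
  have hcan : (P1 A / P0 A) * (P0 A / P1 A) = 1 := by
    rw [div_eq_mul_inv, div_eq_mul_inv]
    calc P1 A * (P0 A)⁻¹ * (P0 A * (P1 A)⁻¹)
        = (P1 A * (P1 A)⁻¹) * ((P0 A)⁻¹ * P0 A) := by ring
      _ = 1 := by
        rw [ENNReal.mul_inv_cancel hA1 hA1t, ENNReal.inv_mul_cancel hA0 hA0t, mul_one]
  calc (P1 A / P0 A) * ((P0 A / P1 A) * (π0 / π1) * b)
      = ((P1 A / P0 A) * (P0 A / P1 A)) * ((π0 / π1) * b) := by ring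
    _ = (π0 / π1) * b := by rw [hcan, one_mul]
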